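/- Suppose i ≠ j, H(j,i) = 0, H(i,j) = 0, each diagonal block D(k) is Hermitian positive semidefinite, and there are real numbers θ_i, θ_j, nonnegative reals r_{k,i}, r_{k,j}, and T×T complex matrices N_k such that for every k, H(k,j) = (r_{k,j}·exp(ι·θ_j)) • N_k and H(k,i) = (r_{k,i}·exp(ι·θ_i)) • N_k. Then the (j,i) block of (I−H)^* D (I−H) equals exp(ι·(θ_i−θ_j)) • B for some Hermitian positive semidefinite T×T matrix B, and consequently every eigenvalue of this block has the form exp(ι·(θ_i−θ_j))·r for some real r ≥ 0. -/

import Mathlib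

open Matrix ComplexOrder
open scoped Pointwise

/-- The `(m·T) × (m·T)` block matrix with `(i,j)` block `H i j`. -/
def ofBlocks {m T : ℕ} (H : Fin m → Fin m → Matrix (Fin T) (Fin T) ℂ) :
    Matrix (Fin m × Fin T) (Fin m × Fin T) ℂ :=
  Matrix.of fun p q => H p.1 q.1 p.2 q.2

/-- The block-diagonal `(m·T) × (m·T)` matrix with diagonal blocks `D i`. -/
def blkDiag {m T : ℕ} (D : Fin m → Matrix (Fin T) (Fin T) ℂ) :
    Matrix (Fin m × Fin T) (Fin m × Fin T) ℂ :=
  Matrix.of fun p q => if p.1 = q.1 then D p.1 p.2 q.2 else 0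

/-- The `(i,j)` block (of size `T × T`) of an `(m·T) × (m·T)` matrix. -/
def blk {m T : ℕ} (A : Matrix (Fin m × Fin T) (Fin m × Fin T) ℂ) (i j : Fin m) :
    Matrix (Fin T) (Fin T) ℂ :=
  Matrix.of fun a b => A (i, a) (j, b)

lemma blk_mul {m T : ℕ} (A B : Matrix (Fin m × Fin T) (Fin m × Fin T) ℂ) (j i : Fin m) :
    blk (A * B) j i = ∑ k, blk A j k * blk B k i := by
  ext a b
  simp [blk, Matrix.mul_apply, Fintype.sum_prod_type, Matrix.sum_apply]

lemma blk_conjTranspose {m T : ℕ} (A : Matrix (Fin m × Fin T) (Fin m × Fin T) ℂ) (j i : Fin m) :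
    blk Aᴴ j i = (blk A i j)ᴴ := rfl

lemma blk_blkDiag {m T : ℕ} (D : Fin m → Matrix (Fin T) (Fin T) ℂ) (k l : Fin m) :
    blk (blkDiag D) k l = if k = l then D k else 0 := by
  ext a b
  by_cases h : k = l <;> simp [blk, blkDiag, h]

lemma blk_one_sub {m T : ℕ} (H : Fin m → Fin m → Matrix (Fin T) (Fin T) ℂ) (k l : Fin m) :
    blk (1 - ofBlocks H) k l = (if k = l then 1 else 0) - H k l := by
  ext a b
  by_cases h : k = l <;>
    simp [blk, ofBlocks, Matrix.one_apply, Matrix.sub_apply, Prod.ext_iff, h]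

lemma psd_add {n : Type*} [Fintype n] {A B : Matrix n n ℂ}
    (hA : A.PosSemidef) (hB : B.PosSemidef) : (A + B).PosSemidef := by
  exact hA.add hB

lemma psd_sum {n : Type*} [Fintype n] {ι : Type*} (s : Finset ι)
    (f : ι → Matrix n n ℂ) (h : ∀ k ∈ s, (f k).PosSemidef) :
    (∑ k ∈ s, f k).PosSemidef := by
  classical
  induction s using Finset.induction with
  | empty => simpa using Matrix.PosSemidef.zero
  | insert _ _ hx ih =>
    rw [Finset.sum_insert hx]
    exact psd_add (h _ (Finset.mem_insert_self _ _))
      (ih fun k hk => h k (Finset.mem_insert_of_mem hk))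

lemma psd_real_smul {n : Type*} [Fintype n] {A : Matrix n n ℂ} (c : ℝ) (hc : 0 ≤ c)
    (hA : A.PosSemidef) : ((c : ℂ) • A).PosSemidef := by
  refine ⟨?_, fun x => ?_⟩
  · unfold Matrix.IsHermitian
    rw [conjTranspose_smul, Complex.star_def, Complex.conj_ofReal, hA.1.eq]
  · exact (hA.smul (show (0:ℂ) ≤ c by exact_mod_cast hc)).2 x

lemma psd_spectrum {n : Type*} [Fintype n] [DecidableEq n] {B : Matrix n n ℂ}
    (hB : B.PosSemidef) (μ : ℂ) (hμ : μ ∈ spectrum ℂ B) : ∃ r : ℝ, 0 ≤ r ∧ μ = r := by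
  rw [hB.isHermitian.spectral_theorem, Unitary.conjStarAlgAut_apply, Unitary.spectrum_star_right_conjugate,
    spectrum_diagonal] at hμ
  obtain ⟨k, hk⟩ := hμ
  exact ⟨hB.isHermitian.eigenvalues k, hB.eigenvalues_nonneg k, by rw [← hk]; rfl⟩

/-- Pruning theorem with relaxed common-child assumption: if all coupling
coefficients towards node `j` (resp. `i`) share a common phase `θj` (resp. `θi`),
then the `(j,i)` block of `(I − H)ᴴ D (I − H)` is `exp(I·(θi − θj))` times a
Hermitian positive semidefinite matrix, so its eigenvalues lie on a fixed ray. -/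
theorem common_phase_block_constant_phase {m T : ℕ}
    (H : Fin m → Fin m → Matrix (Fin T) (Fin T) ℂ)
    (hHdiag : ∀ i, H i i = 0)
    (D : Fin m → Matrix (Fin T) (Fin T) ℂ)
    (hD : ∀ k, (D k).PosSemidef)
    (i j : Fin m) (hij : i ≠ j)
    (hji : H j i = 0) (hijz : H i j = 0)
    (θi θj : ℝ) (rI rJ : Fin m → ℝ)
    (hrI : ∀ k, 0 ≤ rI k) (hrJ : ∀ k, 0 ≤ rJ k)
    (N : Fin m → Matrix (Fin T) (Fin T) ℂ)
    (hkj : ∀ k, H k j = ((rJ k : ℂ) * Complex.exp (Complex.I * θj)) • N k)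
    (hki : ∀ k, H k i = ((rI k : ℂ) * Complex.exp (Complex.I * θi)) • N k) :
    (∃ B : Matrix (Fin T) (Fin T) ℂ, B.PosSemidef ∧
      blk ((1 - ofBlocks H)ᴴ * blkDiag D * (1 - ofBlocks H)) j i =
        Complex.exp (Complex.I * (θi - θj)) • B) ∧
    ∀ μ ∈ spectrum ℂ (blk ((1 - ofBlocks H)ᴴ * blkDiag D * (1 - ofBlocks H)) j i),
      ∃ r : ℝ, 0 ≤ r ∧ μ = Complex.exp (Complex.I * (θi - θj)) * r := by
  set E := (1 : Matrix (Fin m × Fin T) (Fin m × Fin T) ℂ) - ofBlocks H with hE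
  set e := Complex.exp (Complex.I * (θi - θj)) with he
  set B : Matrix (Fin T) (Fin T) ℂ :=
    ∑ l, (if l = i ∨ l = j then 0 else
      ((rJ l * rI l : ℝ) : ℂ) • ((N l)ᴴ * D l * N l)) with hB
  have hBpsd : B.PosSemidef := by
    refine psd_sum _ _ fun l _ => ?_
    by_cases h : l = i ∨ l = j
    · simp only [h, if_true]; exact Matrix.PosSemidef.zero
    · simp only [h, if_false]
      exact psd_real_smul _ (mul_nonneg (hrJ l) (hrI l))
        ((hD l).conjTranspose_mul_mul_same (N l))
  have key : blk (Eᴴ * blkDiag D * E) j i = e • B := by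
    rw [blk_mul, hB, Finset.smul_sum]
    have h1 : ∀ l, blk (Eᴴ * blkDiag D) j l = (blk E l j)ᴴ * D l := by
      intro l
      rw [blk_mul]
      rw [Finset.sum_eq_single l]
      · rw [blk_blkDiag, if_pos rfl, blk_conjTranspose]
      · intro k _ hk
        rw [blk_blkDiag, if_neg hk, mul_zero]
      · intro h; exact absurd (Finset.mem_univ l) h
    refine Finset.sum_congr rfl fun l _ => ?_
    rw [h1, blk_one_sub, blk_one_sub]
    rcases eq_or_ne l j with rfl | hlj
    · rw [if_pos rfl, if_neg (Ne.symm hij), hHdiag, hji]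
      simp [Ne.symm hij]
    · rcases eq_or_ne l i with rfl | hli
      · rw [if_neg hlj, hijz]
        simp [hlj]
      · rw [if_neg hlj, if_neg hli, hkj, hki, zero_sub, zero_sub,
          conjTranspose_neg, neg_mul, neg_mul_neg, conjTranspose_smul,
          Matrix.smul_mul, Matrix.smul_mul, Matrix.mul_smul, smul_smul]
        rw [if_neg (by push_neg; exact ⟨hli, hlj⟩), smul_smul]
        congr 1
        have hconj : (starRingEnd ℂ) (Complex.exp (Complex.I * θj)) =
            Complex.exp (-(Complex.I * θj)) := by
          rw [← Complex.exp_conj]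
          congr 1
          simp [Complex.conj_I]
        rw [Complex.star_def, RingHom.map_mul, hconj, Complex.conj_ofReal]
        rw [he, Complex.ofReal_mul]
        have : Complex.I * ((θi : ℂ) - θj) = Complex.I * θi + -(Complex.I * θj) := by ring
        rw [this, Complex.exp_add]
        ring
  refine ⟨⟨B, hBpsd, key⟩, fun μ hμ => ?_⟩
  rw [key] at hμ
  have hene : e ≠ 0 := Complex.exp_ne_zero _
  have h2 : μ ∈ (Units.mk0 e hene) • spectrum ℂ B := by
    rw [← spectrum.unit_smul_eq_smul]
    simpa [Units.smul_def] using hμ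
  obtain ⟨ν, hν, hmul⟩ := h2
  obtain ⟨r, hr, rfl⟩ := psd_spectrum hBpsd ν hν
  exact ⟨r, hr, by simpa [Units.smul_def, smul_eq_mul] using hmul.symm⟩
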